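/- Let R be a commutative ring with unit and let Y = (Y_1,\ldots,Y_m), X = (X_1,\ldots,X_r) be variables. Assume that h(Y,X) belongs to the subring of R[[Y,X]] generated by R[Y,X] and the series (1 - Y^a X^b)^{-1} with (a,b) \in \mathbb{N}^{m+r}\setminus\{0\}. If moreover h(Y,X) belongs to R[Y][[X]], then h(Y,X) belongs to the subring of R[[Y,X]] generated by R[Y,X] and the series (1 - Y^a X^b)^{-1} with (a,b) \in \mathbb{N}^{m+r}, b \ne 0. -/

import Mathlib

noncomputable section
open scoped Classical

namespace DenefLoeser

/-- the monomial `Y^a X^b` in `R[[Y,X]] = R[[Y₁,…,Y_m,X₁,…,X_r]]`, the variables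
`Y` being indexed by `Fin m` and the variables `X` by `Fin r` -/
def monomialYX (R : Type) [CommRing R] (m r : ℕ) (a : Fin m →₀ ℕ)
    (b : Fin r →₀ ℕ) : MvPowerSeries (Fin m ⊕ Fin r) R :=
  MvPowerSeries.monomial (R := R) (Finsupp.sumElim a b) 1

/-- `h ∈ R[Y][[X]]` : for each monomial `X^bX` in the `X` variables, only
finitely many monomials `Y^bY` have a nonzero coefficient in `h`. -/
def MemPolyYPowerSeriesX (R : Type) [CommRing R] (m r : ℕ)
    (h : MvPowerSeries (Fin m ⊕ Fin r) R) : Prop :=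
  ∀ bX : Fin r →₀ ℕ,
    {bY : Fin m →₀ ℕ |
      MvPowerSeries.coeff (R := R) (Finsupp.sumElim bY bX) h ≠ 0}.Finite

variable (R : Type) [CommRing R] (m r : ℕ)

lemma sumElim_le_iff (a c : Fin m →₀ ℕ) (b d : Fin r →₀ ℕ) :
    Finsupp.sumElim a b ≤ Finsupp.sumElim c d ↔ a ≤ c ∧ b ≤ d := by
  constructor
  · intro h
    exact ⟨fun i => h (Sum.inl i), fun i => h (Sum.inr i)⟩
  · rintro ⟨h1, h2⟩ x
    cases x with
    | inl i => simpa using h1 i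
    | inr i => simpa using h2 i

lemma sumElim_sub (a c : Fin m →₀ ℕ) (b d : Fin r →₀ ℕ) :
    Finsupp.sumElim a b - Finsupp.sumElim c d = Finsupp.sumElim (a - c) (b - d) := by
  ext x
  cases x with
  | inl i => simp [Finsupp.tsub_apply]
  | inr i => simp [Finsupp.tsub_apply]

lemma coeff_mul_monomialYX (q : MvPowerSeries (Fin m ⊕ Fin r) R) (a : Fin m →₀ ℕ)
    (b : Fin r →₀ ℕ) (x : Fin m →₀ ℕ) (y : Fin r →₀ ℕ) :
    MvPowerSeries.coeff (R := R) (Finsupp.sumElim x y) (q * monomialYX R m r a b) =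
      if a ≤ x ∧ b ≤ y then MvPowerSeries.coeff (R := R) (Finsupp.sumElim (x - a) (y - b)) q else 0 := by
  rw [monomialYX, MvPowerSeries.coeff_mul_monomial]
  rw [sumElim_sub]
  by_cases hle : a ≤ x ∧ b ≤ y
  · rw [if_pos ((sumElim_le_iff m r a x b y).mpr hle), if_pos hle, mul_one]
  · rw [if_neg (fun hc => hle ((sumElim_le_iff m r a x b y).mp hc)), if_neg hle]


lemma coeff_mul_oneSub (q : MvPowerSeries (Fin m ⊕ Fin r) R) (a : Fin m →₀ ℕ)
    (b : Fin r →₀ ℕ) (x : Fin m →₀ ℕ) (y : Fin r →₀ ℕ) :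
    MvPowerSeries.coeff (R := R) (Finsupp.sumElim x y) (q * (1 - monomialYX R m r a b)) =
      MvPowerSeries.coeff (R := R) (Finsupp.sumElim x y) q -
        (if a ≤ x ∧ b ≤ y then
          MvPowerSeries.coeff (R := R) (Finsupp.sumElim (x - a) (y - b)) q else 0) := by
  rw [mul_sub, mul_one, map_sub, coeff_mul_monomialYX]

lemma memPoly_mul_oneSub (q : MvPowerSeries (Fin m ⊕ Fin r) R)
    (hq : MemPolyYPowerSeriesX R m r q) (a : Fin m →₀ ℕ) (b : Fin r →₀ ℕ) :
    MemPolyYPowerSeriesX R m r (q * (1 - monomialYX R m r a b)) := by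
  intro bX
  apply Set.Finite.subset ((hq bX).union ((hq (bX - b)).image (· + a)))
  intro bY hbY
  simp only [Set.mem_setOf_eq] at hbY
  rw [coeff_mul_oneSub] at hbY
  by_cases h1 : MvPowerSeries.coeff (R := R) (Finsupp.sumElim bY bX) q ≠ 0
  · exact Or.inl h1
  · right
    push_neg at h1
    rw [h1, zero_sub, neg_ne_zero] at hbY
    split_ifs at hbY with hle
    · exact ⟨bY - a, hbY, tsub_add_cancel_of_le hle.1⟩
    · exact absurd rfl hbY

lemma slice_zero_of_mul_oneSub (q : MvPowerSeries (Fin m ⊕ Fin r) R)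
    (a : Fin m →₀ ℕ) (ha : a ≠ 0) (bX : Fin r →₀ ℕ)
    (hfin : {bY : Fin m →₀ ℕ | MvPowerSeries.coeff (R := R) (Finsupp.sumElim bY bX) q ≠ 0}.Finite)
    (hz : ∀ bY : Fin m →₀ ℕ,
      MvPowerSeries.coeff (R := R) (Finsupp.sumElim bY bX) (q * (1 - monomialYX R m r a 0)) = 0)
    (bY : Fin m →₀ ℕ) : MvPowerSeries.coeff (R := R) (Finsupp.sumElim bY bX) q = 0 := by
  have key : ∀ bY : Fin m →₀ ℕ, MvPowerSeries.coeff (R := R) (Finsupp.sumElim bY bX) q =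
      if a ≤ bY then MvPowerSeries.coeff (R := R) (Finsupp.sumElim (bY - a) bX) q else 0 := by
    intro bY
    have h := hz bY
    rw [coeff_mul_oneSub, sub_eq_zero] at h
    rw [h]
    simp only [zero_le, and_true, tsub_zero]
  have step : ∀ (bY : Fin m →₀ ℕ) (k : ℕ),
      MvPowerSeries.coeff (R := R) (Finsupp.sumElim (bY + k • a) bX) q =
        MvPowerSeries.coeff (R := R) (Finsupp.sumElim bY bX) q := by
    intro bY k
    induction k with
    | zero => simp
    | succ n ih =>
      rw [succ_nsmul, ← add_assoc, key, if_pos le_add_self, add_tsub_cancel_right, ih]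
  by_contra hne
  obtain ⟨i, hi⟩ : ∃ i, a i ≠ 0 := by
    by_contra hc
    push_neg at hc
    exact ha (Finsupp.ext hc)
  apply Set.not_infinite.mpr hfin
  apply Set.infinite_of_injective_forall_mem (f := fun k : ℕ => bY + k • a)
  · intro k l hkl
    have h2 := congrArg (fun f : Fin m →₀ ℕ => f i) hkl
    simp only [Finsupp.add_apply, Finsupp.smul_apply, smul_eq_mul] at h2
    exact Nat.eq_of_mul_eq_mul_right (Nat.pos_of_ne_zero hi) (Nat.add_left_cancel h2)
  · intro k
    simp only [Set.mem_setOf_eq, step]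
    exact hne

/-- the set of `X`-exponents appearing in `q` -/
def XS (q : MvPowerSeries (Fin m ⊕ Fin r) R) : Set (Fin r →₀ ℕ) :=
  {bX | ∃ bY : Fin m →₀ ℕ, MvPowerSeries.coeff (R := R) (Finsupp.sumElim bY bX) q ≠ 0}

lemma memPoly_mul_list (L : List ((Fin m →₀ ℕ) × (Fin r →₀ ℕ)))
    (q : MvPowerSeries (Fin m ⊕ Fin r) R) (hq : MemPolyYPowerSeriesX R m r q) :
    MemPolyYPowerSeriesX R m r
      (q * (L.map fun p => 1 - monomialYX R m r p.1 p.2).prod) := by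
  induction L generalizing q with
  | nil => simpa using hq
  | cons p L ih =>
    have h1 := memPoly_mul_oneSub R m r q hq p.1 p.2
    have := ih _ h1
    rwa [List.map_cons, List.prod_cons, ← mul_assoc]

lemma XS_finite_of_mul_list (L : List (Fin m →₀ ℕ)) (hL : ∀ a ∈ L, a ≠ 0)
    (q : MvPowerSeries (Fin m ⊕ Fin r) R) (hq : MemPolyYPowerSeriesX R m r q)
    (hfin : (XS R m r (q * (L.map fun a => 1 - monomialYX R m r a 0).prod)).Finite) :
    (XS R m r q).Finite := by
  induction L generalizing q with
  | nil => simpa using hfin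
  | cons a L ih =>
    have hq' := memPoly_mul_oneSub R m r q hq a 0
    have hfin' : (XS R m r (q * (1 - monomialYX R m r a 0))).Finite := by
      apply ih (fun x hx => hL x (List.mem_cons_of_mem a hx)) _ hq'
      rw [List.map_cons, List.prod_cons, ← mul_assoc] at hfin
      exact hfin
    apply Set.Finite.subset hfin'
    intro bX hbX
    obtain ⟨bY, hbY⟩ := hbX
    by_contra hnot
    apply hbY
    apply slice_zero_of_mul_oneSub R m r q a (hL a (List.mem_cons_self (a := a) (l := L))) bX (hq bX)
    intro bY'
    by_contra hc
    exact hnot ⟨bY', hc⟩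

/-- the subring of polynomials inside the power series ring -/
def P0 : Subring (MvPowerSeries (Fin m ⊕ Fin r) R) :=
  Subring.closure
    ((Set.range (MvPowerSeries.C (σ := Fin m ⊕ Fin r) (R := R)) :
        Set (MvPowerSeries (Fin m ⊕ Fin r) R)) ∪
      Set.range (MvPowerSeries.X : Fin m ⊕ Fin r → MvPowerSeries (Fin m ⊕ Fin r) R))

lemma coe_mem_P0 (P : MvPolynomial (Fin m ⊕ Fin r) R) :
    (↑P : MvPowerSeries (Fin m ⊕ Fin r) R) ∈ P0 R m r := by
  induction P using MvPolynomial.induction_on with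
  | C a =>
    rw [MvPolynomial.coe_C]
    exact Subring.subset_closure (Or.inl ⟨a, rfl⟩)
  | add p q hp hq =>
    rw [MvPolynomial.coe_add]; exact add_mem hp hq
  | mul_X p s hp =>
    rw [MvPolynomial.coe_mul, MvPolynomial.coe_X]
    exact mul_mem hp (Subring.subset_closure (Or.inr ⟨s, rfl⟩))

lemma mem_P0_iff (q : MvPowerSeries (Fin m ⊕ Fin r) R) :
    q ∈ P0 R m r ↔ ∃ P : MvPolynomial (Fin m ⊕ Fin r) R, (↑P : MvPowerSeries (Fin m ⊕ Fin r) R) = q := by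
  constructor
  · intro hq
    have hle : P0 R m r ≤ (MvPolynomial.coeToMvPowerSeries.ringHom
        (σ := Fin m ⊕ Fin r) (R := R)).range := by
      unfold P0
      apply Subring.closure_le.mpr
      rintro x (⟨a, rfl⟩ | ⟨s, rfl⟩)
      · exact ⟨MvPolynomial.C a, MvPolynomial.coe_C a⟩
      · exact ⟨MvPolynomial.X s, MvPolynomial.coe_X s⟩
    exact hle hq
  · rintro ⟨P, rfl⟩
    exact coe_mem_P0 R m r P

lemma monomialYX_mem_P0 (a : Fin m →₀ ℕ) (b : Fin r →₀ ℕ) :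
    monomialYX R m r a b ∈ P0 R m r := by
  rw [mem_P0_iff]
  exact ⟨MvPolynomial.monomial (Finsupp.sumElim a b) 1,
    by rw [monomialYX]; exact MvPolynomial.coe_monomial _ _⟩

lemma XS_coe_finite (P : MvPolynomial (Fin m ⊕ Fin r) R) :
    (XS R m r (↑P : MvPowerSeries (Fin m ⊕ Fin r) R)).Finite := by
  apply Set.Finite.subset
    (P.support.finite_toSet.image fun e => (Finsupp.sumFinsuppEquivProdFinsupp e).2)
  rintro bX ⟨bY, hbY⟩
  rw [MvPolynomial.coeff_coe] at hbY
  refine ⟨Finsupp.sumElim bY bX, by simpa using hbY, ?_⟩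
  ext y
  rw [Finsupp.snd_sumFinsuppEquivProdFinsupp, Finsupp.sumElim_inr]

lemma support_finite (q : MvPowerSeries (Fin m ⊕ Fin r) R)
    (hq : MemPolyYPowerSeriesX R m r q) (hXS : (XS R m r q).Finite) :
    {e : Fin m ⊕ Fin r →₀ ℕ | MvPowerSeries.coeff (R := R) e q ≠ 0}.Finite := by
  apply Set.Finite.subset (Set.Finite.image
    (fun p : (Fin m →₀ ℕ) × (Fin r →₀ ℕ) => Finsupp.sumElim p.1 p.2)
    (hXS.biUnion (fun bX _ => (hq bX).prod (Set.finite_singleton bX))))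
  intro e he
  obtain ⟨bY, bX, rfl⟩ : ∃ bY bX, e = Finsupp.sumElim bY bX :=
    ⟨(Finsupp.sumFinsuppEquivProdFinsupp e).1, (Finsupp.sumFinsuppEquivProdFinsupp e).2,
      (Finsupp.sumFinsuppEquivProdFinsupp.symm_apply_apply e).symm⟩
  refine ⟨(bY, bX), ?_, rfl⟩
  rw [Set.mem_iUnion₂]
  exact ⟨bX, ⟨bY, he⟩, Set.mk_mem_prod he rfl⟩

lemma eq_coe_of_support_finite (q : MvPowerSeries (Fin m ⊕ Fin r) R)
    (hfin : {e : Fin m ⊕ Fin r →₀ ℕ | MvPowerSeries.coeff (R := R) e q ≠ 0}.Finite) :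
    ∃ P : MvPolynomial (Fin m ⊕ Fin r) R, (↑P : MvPowerSeries (Fin m ⊕ Fin r) R) = q := by
  refine ⟨∑ e ∈ hfin.toFinset, MvPolynomial.monomial e (MvPowerSeries.coeff (R := R) e q), ?_⟩
  ext e
  rw [MvPolynomial.coeff_coe, MvPolynomial.coeff_sum]
  simp only [MvPolynomial.coeff_monomial]
  rw [Finset.sum_ite_eq' hfin.toFinset e (fun e' => MvPowerSeries.coeff (R := R) e' q)]
  split_ifs with hmem
  · rfl
  · rw [Set.Finite.mem_toFinset, Set.mem_setOf_eq, not_not] at hmem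
    exact hmem.symm

lemma prod_oneSub_mem_P0 (L : List ((Fin m →₀ ℕ) × (Fin r →₀ ℕ))) :
    (L.map fun p => 1 - monomialYX R m r p.1 p.2).prod ∈ P0 R m r := by
  apply list_prod_mem
  intro x hx
  obtain ⟨p, _, rfl⟩ := List.mem_map.mp hx
  exact sub_mem (one_mem _) (monomialYX_mem_P0 R m r p.1 p.2)

lemma exists_clearing_list (h : MvPowerSeries (Fin m ⊕ Fin r) R)
    (hgen : h ∈ Subring.closure
      ((Set.range (MvPowerSeries.C (σ := Fin m ⊕ Fin r) (R := R)) :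
          Set (MvPowerSeries (Fin m ⊕ Fin r) R)) ∪
        Set.range (MvPowerSeries.X :
          Fin m ⊕ Fin r → MvPowerSeries (Fin m ⊕ Fin r) R) ∪
        {g : MvPowerSeries (Fin m ⊕ Fin r) R |
          ∃ (a : Fin m →₀ ℕ) (b : Fin r →₀ ℕ), ¬(a = 0 ∧ b = 0) ∧
            g * (1 - monomialYX R m r a b) = 1})) :
    ∃ L : List ((Fin m →₀ ℕ) × (Fin r →₀ ℕ)),
      (∀ p ∈ L, ¬(p.1 = 0 ∧ p.2 = 0) ∧
        ∃ g, g * (1 - monomialYX R m r p.1 p.2) = 1) ∧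
      h * (L.map fun p => 1 - monomialYX R m r p.1 p.2).prod ∈ P0 R m r := by
  induction hgen using Subring.closure_induction with
  | mem x hx =>
    rcases hx with (hx | hx)
    · exact ⟨[], by simp, by simpa [P0] using Subring.subset_closure hx⟩
    · obtain ⟨a, b, hab, hinv⟩ := hx
      refine ⟨[(a, b)], ?_, ?_⟩
      · intro p hp
        rw [List.mem_singleton] at hp
        subst hp
        exact ⟨hab, ⟨x, hinv⟩⟩
      · simp only [List.map_cons, List.map_nil, List.prod_cons, List.prod_nil, mul_one]
        rw [hinv]
        exact one_mem _
  | zero => exact ⟨[], by simp, by simpa using zero_mem (P0 R m r)⟩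
  | one => exact ⟨[], by simp, by simpa using one_mem (P0 R m r)⟩
  | add x y hx hy ihx ihy =>
    obtain ⟨L₁, hL₁, hm₁⟩ := ihx
    obtain ⟨L₂, hL₂, hm₂⟩ := ihy
    refine ⟨L₁ ++ L₂, ?_, ?_⟩
    · intro p hp
      rcases List.mem_append.mp hp with hp | hp
      · exact hL₁ p hp
      · exact hL₂ p hp
    · rw [List.map_append, List.prod_append]
      have key : (x + y) *
          ((L₁.map fun p => 1 - monomialYX R m r p.1 p.2).prod *
            (L₂.map fun p => 1 - monomialYX R m r p.1 p.2).prod) =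
          x * (L₁.map fun p => 1 - monomialYX R m r p.1 p.2).prod *
            (L₂.map fun p => 1 - monomialYX R m r p.1 p.2).prod +
          y * (L₂.map fun p => 1 - monomialYX R m r p.1 p.2).prod *
            (L₁.map fun p => 1 - monomialYX R m r p.1 p.2).prod := by ring
      rw [key]
      exact add_mem (mul_mem hm₁ (prod_oneSub_mem_P0 R m r L₂))
        (mul_mem hm₂ (prod_oneSub_mem_P0 R m r L₁))
  | neg x hx ihx =>
    obtain ⟨L₁, hL₁, hm₁⟩ := ihx
    exact ⟨L₁, hL₁, by rw [neg_mul]; exact neg_mem hm₁⟩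
  | mul x y hx hy ihx ihy =>
    obtain ⟨L₁, hL₁, hm₁⟩ := ihx
    obtain ⟨L₂, hL₂, hm₂⟩ := ihy
    refine ⟨L₁ ++ L₂, ?_, ?_⟩
    · intro p hp
      rcases List.mem_append.mp hp with hp | hp
      · exact hL₁ p hp
      · exact hL₂ p hp
    · rw [List.map_append, List.prod_append]
      have key : x * y *
          ((L₁.map fun p => 1 - monomialYX R m r p.1 p.2).prod *
            (L₂.map fun p => 1 - monomialYX R m r p.1 p.2).prod) =
          x * (L₁.map fun p => 1 - monomialYX R m r p.1 p.2).prod *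
            (y * (L₂.map fun p => 1 - monomialYX R m r p.1 p.2).prod) := by ring
      rw [key]
      exact mul_mem hm₁ hm₂

/-- **Lemma 5.3 (Denef–Loeser).** Let `R` be a commutative ring with unit and
let `Y = (Y₁,…,Y_m)`, `X = (X₁,…,X_r)` be variables. Assume that `h(Y,X)`
belongs to the subring of `R[[Y,X]]` generated by `R[Y,X]` and the series
`(1 - Y^a X^b)⁻¹` with `(a,b) ∈ ℕ^{m+r} \ {0}`. If moreover `h(Y,X)` belongs to
`R[Y][[X]]`, then `h(Y,X)` belongs to the subring of `R[[Y,X]]` generated by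
`R[Y,X]` and the series `(1 - Y^a X^b)⁻¹` with `(a,b) ∈ ℕ^{m+r}`, `b ≠ 0`. -/
theorem rational_series_with_poly_coefficients (R : Type) [CommRing R]
    (m r : ℕ) (h : MvPowerSeries (Fin m ⊕ Fin r) R)
    (hgen : h ∈ Subring.closure
      ((Set.range (MvPowerSeries.C (σ := Fin m ⊕ Fin r) (R := R)) :
          Set (MvPowerSeries (Fin m ⊕ Fin r) R)) ∪
        Set.range (MvPowerSeries.X :
          Fin m ⊕ Fin r → MvPowerSeries (Fin m ⊕ Fin r) R) ∪
        {g : MvPowerSeries (Fin m ⊕ Fin r) R |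
          ∃ (a : Fin m →₀ ℕ) (b : Fin r →₀ ℕ), ¬(a = 0 ∧ b = 0) ∧
            g * (1 - monomialYX R m r a b) = 1}))
    (hpoly : MemPolyYPowerSeriesX R m r h) :
    h ∈ Subring.closure
      ((Set.range (MvPowerSeries.C (σ := Fin m ⊕ Fin r) (R := R)) :
          Set (MvPowerSeries (Fin m ⊕ Fin r) R)) ∪
        Set.range (MvPowerSeries.X :
          Fin m ⊕ Fin r → MvPowerSeries (Fin m ⊕ Fin r) R) ∪
        {g : MvPowerSeries (Fin m ⊕ Fin r) R |
          ∃ (a : Fin m →₀ ℕ) (b : Fin r →₀ ℕ), b ≠ 0 ∧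
            g * (1 - monomialYX R m r a b) = 1}) := by
  classical
  obtain ⟨L, hLgood, hLmem⟩ := exists_clearing_list R m r h hgen
  let f : (Fin m →₀ ℕ) × (Fin r →₀ ℕ) → MvPowerSeries (Fin m ⊕ Fin r) R :=
    fun p => 1 - monomialYX R m r p.1 p.2
  let L₁ := L.filter fun p => decide (p.2 ≠ 0)
  let L₀ := L.filter fun p => !decide (p.2 ≠ 0)
  have hperm : List.Perm (L₁ ++ L₀) L := List.filter_append_perm _ L
  have hL₁sub : ∀ p ∈ L₁, p ∈ L := fun p hp => List.mem_of_mem_filter hp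
  have hL₀sub : ∀ p ∈ L₀, p ∈ L := fun p hp => List.mem_of_mem_filter hp
  have hL₁ne : ∀ p ∈ L₁, p.2 ≠ 0 := by
    intro p hp
    have := (List.mem_filter.mp hp).2
    simpa using this
  have hL₀eq : ∀ p ∈ L₀, p.2 = 0 := by
    intro p hp
    have := (List.mem_filter.mp hp).2
    simpa using this
  have hprodsplit : (L.map f).prod = (L₁.map f).prod * (L₀.map f).prod := by
    rw [← List.prod_append, ← List.map_append]
    exact (((hperm.map f)).prod_eq).symm
  -- the series q = h * ∏_{p ∈ L₁} (1 - Y^{p.1} X^{p.2})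
  have hqP0 : (h * (L₁.map f).prod) * (L₀.map f).prod ∈ P0 R m r := by
    rw [mul_assoc, ← hprodsplit]
    exact hLmem
  have hq_poly : MemPolyYPowerSeriesX R m r (h * (L₁.map f).prod) :=
    memPoly_mul_list R m r L₁ h hpoly
  -- rewrite the L₀ product as a product over `Y`-only exponents
  have hL₀prod : (L₀.map f).prod =
      ((L₀.map Prod.fst).map fun a => 1 - monomialYX R m r a 0).prod := by
    rw [List.map_map]
    congr 1
    apply List.map_congr_left
    intro p hp
    simp only [Function.comp_apply, f]
    rw [hL₀eq p hp]
  have hLA : ∀ a ∈ L₀.map Prod.fst, a ≠ 0 := by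
    intro a ha
    obtain ⟨p, hp, rfl⟩ := List.mem_map.mp ha
    intro ha0
    exact (hLgood p (hL₀sub p hp)).1 ⟨ha0, hL₀eq p hp⟩
  -- the X-support of q is finite
  have hXSq : (XS R m r (h * (L₁.map f).prod)).Finite := by
    apply XS_finite_of_mul_list R m r (L₀.map Prod.fst) hLA _ hq_poly
    rw [← hL₀prod]
    obtain ⟨P, hP⟩ := (mem_P0_iff R m r _).mp hqP0
    rw [← hP]
    exact XS_coe_finite R m r P
  -- hence q is a polynomial
  obtain ⟨Q, hQ⟩ := eq_coe_of_support_finite R m r _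
    (support_finite R m r _ hq_poly hXSq)
  -- q belongs to the target subring
  have hq_mem : h * (L₁.map f).prod ∈ Subring.closure
      ((Set.range (MvPowerSeries.C (σ := Fin m ⊕ Fin r) (R := R)) :
          Set (MvPowerSeries (Fin m ⊕ Fin r) R)) ∪
        Set.range (MvPowerSeries.X :
          Fin m ⊕ Fin r → MvPowerSeries (Fin m ⊕ Fin r) R) ∪
        {g : MvPowerSeries (Fin m ⊕ Fin r) R |
          ∃ (a : Fin m →₀ ℕ) (b : Fin r →₀ ℕ), b ≠ 0 ∧
            g * (1 - monomialYX R m r a b) = 1}) := by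
    apply Subring.closure_mono Set.subset_union_left
    rw [← hQ]
    exact coe_mem_P0 R m r Q
  -- the inverses of the factors in L₁
  let G : (Fin m →₀ ℕ) × (Fin r →₀ ℕ) → MvPowerSeries (Fin m ⊕ Fin r) R :=
    fun p => if hp : ∃ g, g * (1 - monomialYX R m r p.1 p.2) = 1 then hp.choose else 1
  have hG : ∀ p ∈ L₁, G p * (1 - monomialYX R m r p.1 p.2) = 1 := by
    intro p hp
    have hex := (hLgood p (hL₁sub p hp)).2
    simp only [G, dif_pos hex]
    exact hex.choose_spec
  have hfinal : (h * (L₁.map f).prod) * (L₁.map G).prod = h := by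
    rw [mul_assoc, ← List.prod_map_mul]
    have : (L₁.map fun p => f p * G p).prod = 1 := by
      apply List.prod_eq_one
      intro x hx
      obtain ⟨p, hp, rfl⟩ := List.mem_map.mp hx
      rw [mul_comm]
      exact hG p hp
    rw [this, mul_one]
  rw [← hfinal]
  apply mul_mem hq_mem
  apply list_prod_mem
  intro x hx
  obtain ⟨p, hp, rfl⟩ := List.mem_map.mp hx
  exact Subring.subset_closure (Or.inr ⟨p.1, p.2, hL₁ne p hp, hG p hp⟩)

end DenefLoeser
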